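/- Let G be obtained from a connected bipartite graph with bipartition U ∪ W by attaching at least one pendant vertex to each u ∈ U and any number of pendant triangles to each w ∈ W. Then IS(G) = IM(G) if and only if exactly one pendant vertex is attached to each u ∈ U and at least one pendant triangle is attached to each w ∈ W. -/

import Mathlib

variable {V : Type*}

/-- `M` is a matching in `G`: a finite set of edges of `G` that are pairwise non-incident. -/
def IsMatchingSet (G : SimpleGraph V) (M : Finset (Sym2 V)) : Prop :=
  (∀ e ∈ M, e ∈ G.edgeSet) ∧
  ∀ e ∈ M, ∀ f ∈ M, e ≠ f → ∀ v : V, v ∈ e → v ∉ f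

/-- `M` is an induced matching in `G`: a matching such that no edge of `G`
joins two distinct edges of `M`. -/
def IsInducedMatchingSet (G : SimpleGraph V) (M : Finset (Sym2 V)) : Prop :=
  IsMatchingSet G M ∧
  ∀ e ∈ M, ∀ f ∈ M, e ≠ f → ∀ a ∈ e, ∀ b ∈ f, ¬ G.Adj a b

/-- `S` is an independent set in `G`. -/
def IsIndepFinset (G : SimpleGraph V) (S : Finset V) : Prop :=
  ∀ a ∈ S, ∀ b ∈ S, ¬ G.Adj a b

/-- Maximum matching size `MM(G)`. -/
noncomputable def MMn (G : SimpleGraph V) : ℕ :=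
  sSup {n | ∃ M : Finset (Sym2 V), IsMatchingSet G M ∧ M.card = n}

/-- Maximum induced matching size `IM(G)`. -/
noncomputable def IMn (G : SimpleGraph V) : ℕ :=
  sSup {n | ∃ M : Finset (Sym2 V), IsInducedMatchingSet G M ∧ M.card = n}

/-- Maximum independent set size `IS(G)`. -/
noncomputable def ISn (G : SimpleGraph V) : ℕ :=
  sSup {n | ∃ S : Finset V, IsIndepFinset G S ∧ S.card = n}

/-- Vertex type of the Cameron–Walker construction: the original vertices,
the pendant vertices (`nP x` of them attached to `x`), and the pendant-triangle
vertices (`2 · nT x` of them attached to `x`, in pairs indexed by `ℕ × Bool`). -/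
def AugV (V' : Type*) (nP nT : V' → ℕ) : Type _ :=
  V' ⊕ ({p : V' × ℕ // p.2 < nP p.1} ⊕ {q : V' × ℕ × Bool // q.2.1 < nT q.1})

/-- Base adjacency relation of the Cameron–Walker construction. -/
def AugAdj {V' : Type*} (G' : SimpleGraph V') (nP nT : V' → ℕ) :
    AugV V' nP nT → AugV V' nP nT → Prop
  | Sum.inl a, Sum.inl b => G'.Adj a b
  | Sum.inl a, Sum.inr (Sum.inl p) => p.1.1 = a
  | Sum.inl a, Sum.inr (Sum.inr q) => q.1.1 = a
  | Sum.inr (Sum.inr q), Sum.inr (Sum.inr q') => q.1.1 = q'.1.1 ∧ q.1.2.1 = q'.1.2.1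
  | _, _ => False

/-- The graph obtained from `G'` by attaching `nP x` pendant vertices and
`nT x` pendant triangles to each vertex `x`. -/
def AugGraph {V' : Type*} (G' : SimpleGraph V') (nP nT : V' → ℕ) :
    SimpleGraph (AugV V' nP nT) :=
  SimpleGraph.fromRel (AugAdj G' nP nT)

section CWaux
open Sum

variable {V' : Type*} (G' : SimpleGraph V') (nP nT : V' → ℕ)

/-- pendant vertex indices -/
abbrev PendT := {p : V' × ℕ // p.2 < nP p.1}
/-- triangle-vertex indices -/
abbrev TriT := {q : V' × ℕ × Bool // q.2.1 < nT q.1}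
/-- triangle indices -/
abbrev TIdx := {q : V' × ℕ // q.2 < nT q.1}

variable {nP nT}

@[simp] lemma aug_adj_inl_inl {a b : V'} :
    (AugGraph G' nP nT).Adj (Sum.inl a) (Sum.inl b) ↔ G'.Adj a b := by
  constructor
  · rintro ⟨-, h | h⟩
    · exact h
    · exact h.symm
  · intro h
    exact ⟨fun he => h.ne (Sum.inl_injective he), Or.inl h⟩

variable {G'}

@[simp] lemma aug_adj_inl_pend {a : V'} {p : PendT nP} :
    (AugGraph G' nP nT).Adj (Sum.inl a) (Sum.inr (Sum.inl p)) ↔ p.1.1 = a := by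
  refine (SimpleGraph.fromRel_adj _ _ _).trans ?_
  simp [AugAdj]
  intro _ h
  cases h

@[simp] lemma aug_adj_inl_tri {a : V'} {q : TriT nT} :
    (AugGraph G' nP nT).Adj (Sum.inl a) (Sum.inr (Sum.inr q)) ↔ q.1.1 = a := by
  refine (SimpleGraph.fromRel_adj _ _ _).trans ?_
  simp [AugAdj]
  intro _ h
  cases h

@[simp] lemma aug_adj_pend_pend {p p' : PendT nP} :
    ¬ (AugGraph G' nP nT).Adj (Sum.inr (Sum.inl p)) (Sum.inr (Sum.inl p')) := by
  intro h
  have h' := (SimpleGraph.fromRel_adj _ _ _).mp h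
  simp [AugAdj] at h'

@[simp] lemma aug_adj_pend_tri {p : PendT nP} {q : TriT nT} :
    ¬ (AugGraph G' nP nT).Adj (Sum.inr (Sum.inl p)) (Sum.inr (Sum.inr q)) := by
  intro h
  have h' := (SimpleGraph.fromRel_adj _ _ _).mp h
  simp [AugAdj] at h'

@[simp] lemma aug_adj_tri_tri {q q' : TriT nT} :
    (AugGraph G' nP nT).Adj (Sum.inr (Sum.inr q)) (Sum.inr (Sum.inr q')) ↔
      q ≠ q' ∧ q.1.1 = q'.1.1 ∧ q.1.2.1 = q'.1.2.1 := by
  simp only [AugGraph, SimpleGraph.fromRel_adj, AugAdj, ne_eq, Sum.inr.injEq]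
  constructor
  · rintro ⟨h, h2 | h2⟩
    · exact ⟨fun he => h (by rw [he]), h2⟩
    · exact ⟨fun he => h (by rw [he]), h2.1.symm, h2.2.symm⟩
  · rintro ⟨h, h2⟩
    exact ⟨fun he => h (Sum.inr_injective (Sum.inr_injective he)), Or.inl h2⟩

end CWaux
section CWcard
open Sum

variable {V' : Type*} [Fintype V'] [DecidableEq V'] {nP nT : V' → ℕ}

def pendEquiv (nP : V' → ℕ) : PendT nP ≃ Σ x : V', Fin (nP x) where
  toFun p := ⟨p.1.1, ⟨p.1.2, p.2⟩⟩
  invFun s := ⟨(s.1, s.2.1), s.2.2⟩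
  left_inv := fun ⟨⟨x, i⟩, h⟩ => rfl
  right_inv := fun ⟨x, i⟩ => rfl

instance instFintypePendT (nP : V' → ℕ) : Fintype (PendT nP) :=
  Fintype.ofEquiv _ (pendEquiv nP).symm

lemma card_pendT (nP : V' → ℕ) : Fintype.card (PendT nP) = ∑ x : V', nP x := by
  rw [Fintype.card_congr (pendEquiv nP), Fintype.card_sigma]
  simp

/-- subtype of vertices of `W` with no triangle -/
abbrev W0T (W : Finset V') (nT : V' → ℕ) := {w : V' // w ∈ W ∧ nT w = 0}

lemma card_W0T (W : Finset V') (nT : V' → ℕ) :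
    Fintype.card (W0T W nT) = (W.filter (fun w => nT w = 0)).card := by
  rw [Fintype.card_subtype]
  congr 1
  ext w
  simp

/-- the index type for maximum independent sets -/
abbrev JT (W : Finset V') (nP nT : V' → ℕ) :=
  PendT nP ⊕ (TIdx nT ⊕ W0T W nT)

/-- the index type for maximum (induced) matchings -/
abbrev KT (U : Finset V') (nT : V' → ℕ) := {u : V' // u ∈ U} ⊕ TIdx nT

lemma card_JT (U W : Finset V') (nP nT : V' → ℕ)
    (hpart : ∀ x : V', x ∈ U ∨ x ∈ W) (hdisj : ∀ x : V', ¬(x ∈ U ∧ x ∈ W))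
    (hnP0 : ∀ x ∉ U, nP x = 0) (hnT0 : ∀ x ∉ W, nT x = 0) :
    Fintype.card (JT W nP nT) = ∑ u ∈ U, nP u + ∑ w ∈ W, max (nT w) 1 := by
  have h1 : ∑ x : V', nP x = ∑ u ∈ U, nP u :=
    (Finset.sum_subset (Finset.subset_univ U) (fun x _ hx => hnP0 x hx)).symm
  have h2 : ∑ x : V', nT x = ∑ w ∈ W, nT w :=
    (Finset.sum_subset (Finset.subset_univ W) (fun x _ hx => hnT0 x hx)).symm
  have h3 : ∑ w ∈ W, max (nT w) 1
      = ∑ w ∈ W, nT w + (W.filter (fun w => nT w = 0)).card := by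
    rw [Finset.card_filter, ← Finset.sum_add_distrib]
    refine Finset.sum_congr rfl fun w _ => ?_
    rcases Nat.eq_zero_or_pos (nT w) with h | h
    · simp [h]
    · rw [Nat.max_eq_left h, if_neg (by omega)]
      omega
  simp only [JT, Fintype.card_sum, card_pendT, card_pendT nT, card_W0T]
  rw [h1, h2, h3]

lemma card_KT (U W : Finset V') (nT : V' → ℕ)
    (hnT0 : ∀ x ∉ W, nT x = 0) :
    Fintype.card (KT U nT) = U.card + ∑ w ∈ W, nT w := by
  have h2 : ∑ x : V', nT x = ∑ w ∈ W, nT w :=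
    (Finset.sum_subset (Finset.subset_univ W) (fun x _ hx => hnT0 x hx)).symm
  simp only [KT, Fintype.card_sum, Fintype.card_coe, card_pendT nT]
  rw [h2]

end CWcard
section CWIS
open Sum

variable {V' : Type*} [Fintype V'] [DecidableEq V'] {G' : SimpleGraph V'}
  {U W : Finset V'} {nP nT : V' → ℕ}

/-- the map from the index type `JT` into the vertices, realizing a maximum independent set -/
def jmap (W : Finset V') (nP nT : V' → ℕ) : JT W nP nT → AugV V' nP nT
  | Sum.inl p => Sum.inr (Sum.inl p)
  | Sum.inr (Sum.inl t) => Sum.inr (Sum.inr ⟨(t.1.1, t.1.2, true), t.2⟩)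
  | Sum.inr (Sum.inr w) => Sum.inl w.1

lemma jmap_inj : Function.Injective (jmap W nP nT) := by
  rintro (p | t | w) (p' | t' | w') h <;> simp only [jmap] at h
  · injection h with h; injection h with h; rw [h]
  · injection h with h; injection h
  · injection h
  · injection h with h; injection h
  · injection h with h
    injection h with h
    injection h with h
    injection h with h1 h2
    injection h2 with h2 _
    exact congrArg (Sum.inr ∘ Sum.inl) (Subtype.ext (Prod.ext h1 h2))
  · injection h
  · injection h
  · injection h
  · injection h with h; exact congrArg (Sum.inr ∘ Sum.inr) (Subtype.ext h)

lemma jmap_indep (hdisj : ∀ x : V', ¬(x ∈ U ∧ x ∈ W))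
    (hbip : ∀ a b : V', G'.Adj a b → (a ∈ U ∧ b ∈ W) ∨ (a ∈ W ∧ b ∈ U))
    (hnP0 : ∀ x ∉ U, nP x = 0)
    (j j' : JT W nP nT) : ¬ (AugGraph G' nP nT).Adj (jmap W nP nT j) (jmap W nP nT j') := by
  have keyT : ∀ (t : TIdx nT) (w : W0T W nT), (t : V' × ℕ).1 ≠ w.1 := by
    rintro ⟨⟨x, i⟩, ht⟩ ⟨y, hy, hy0⟩ hxy
    simp only at ht hxy
    rw [hxy, hy0] at ht
    omega
  have keyP : ∀ (p : PendT nP) (w : W0T W nT), (p : V' × ℕ).1 ≠ w.1 := by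
    rintro ⟨⟨x, i⟩, hp⟩ ⟨y, hy, hy0⟩ hxy
    simp only at hp hxy
    subst hxy
    refine hdisj x ⟨?_, hy⟩
    by_contra hc
    rw [hnP0 x hc] at hp
    omega
  rcases j with p | t | w <;> rcases j' with p' | t' | w'
  · exact aug_adj_pend_pend
  · exact aug_adj_pend_tri
  · intro hadj
    exact keyP p w' ((AugGraph G' nP nT).adj_symm hadj |> aug_adj_inl_pend.mp)
  · intro hadj
    exact aug_adj_pend_tri ((AugGraph G' nP nT).adj_symm hadj)
  · intro hadj
    obtain ⟨hne, h1, h2⟩ := aug_adj_tri_tri.mp hadj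
    simp only at h1 h2
    exact hne (Subtype.ext (Prod.ext h1 (Prod.ext h2 rfl)))
  · intro hadj
    exact keyT t w' ((AugGraph G' nP nT).adj_symm hadj |> aug_adj_inl_tri.mp)
  · intro hadj
    exact keyP p' w (aug_adj_inl_pend.mp hadj)
  · intro hadj
    exact keyT t' w (aug_adj_inl_tri.mp hadj)
  · intro hadj
    rcases hbip _ _ ((aug_adj_inl_inl G').mp hadj) with ⟨h1, -⟩ | ⟨-, h2⟩
    · exact hdisj w.1 ⟨h1, w.2.1⟩
    · exact hdisj w'.1 ⟨h2, w'.2.1⟩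

lemma IS_mem (hdisj : ∀ x : V', ¬(x ∈ U ∧ x ∈ W))
    (hbip : ∀ a b : V', G'.Adj a b → (a ∈ U ∧ b ∈ W) ∨ (a ∈ W ∧ b ∈ U))
    (hnP0 : ∀ x ∉ U, nP x = 0) :
    ∃ S : Finset (AugV V' nP nT), IsIndepFinset (AugGraph G' nP nT) S ∧
      S.card = Fintype.card (JT W nP nT) := by
  refine ⟨Finset.univ.map ⟨jmap W nP nT, jmap_inj⟩, ?_, by simp⟩
  rintro a ha b hb
  obtain ⟨j, -, rfl⟩ := Finset.mem_map.mp ha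
  obtain ⟨j', -, rfl⟩ := Finset.mem_map.mp hb
  exact jmap_indep hdisj hbip hnP0 j j'

end CWIS
section CWISup
open Sum

variable {V' : Type*} [Fintype V'] [DecidableEq V'] {G' : SimpleGraph V'}
  {U W : Finset V'} {nP nT : V' → ℕ}

/-- classification of vertices into blocks, for the independent set upper bound -/
def classify (U W : Finset V') (nP nT : V' → ℕ)
    (hpart : ∀ x : V', x ∈ U ∨ x ∈ W) (hnP : ∀ u ∈ U, 1 ≤ nP u) :
    AugV V' nP nT → JT W nP nT
  | Sum.inl x =>
      if hx : x ∈ U then Sum.inl ⟨(x, 0), hnP x hx⟩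
      else if h0 : nT x = 0 then Sum.inr (Sum.inr ⟨x, (hpart x).resolve_left hx, h0⟩)
      else Sum.inr (Sum.inl ⟨(x, 0), Nat.pos_of_ne_zero h0⟩)
  | Sum.inr (Sum.inl p) => Sum.inl p
  | Sum.inr (Sum.inr q) => Sum.inr (Sum.inl ⟨(q.1.1, q.1.2.1), q.2⟩)

lemma IS_le (hpart : ∀ x : V', x ∈ U ∨ x ∈ W) (hnP : ∀ u ∈ U, 1 ≤ nP u)
    (S : Finset (AugV V' nP nT)) (hS : IsIndepFinset (AugGraph G' nP nT) S) :
    S.card ≤ Fintype.card (JT W nP nT) := by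
  rw [← Finset.card_univ]
  refine Finset.card_le_card_of_injOn (classify U W nP nT hpart hnP)
    (fun a _ => Finset.mem_univ _) ?_
  rintro a ha b hb hab
  rcases a with x | ⟨⟨px, pi⟩, hp⟩ | ⟨⟨qx, qi, qb⟩, hq⟩ <;>
    rcases b with y | ⟨⟨py, pj⟩, hp'⟩ | ⟨⟨qy, qj, qb'⟩, hq'⟩ <;>
    simp only [classify] at hab <;>
    (try split_ifs at hab) <;>
    simp only [Sum.inl.injEq, Sum.inr.injEq, Subtype.mk.injEq, Prod.mk.injEq,
      reduceCtorEq, and_true, true_and, eq_self_iff_true] at hab <;>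
    first
      | exact congrArg Sum.inl hab
      | exact congrArg (Sum.inr ∘ Sum.inl) (Subtype.ext (Prod.ext hab.1 hab.2))
      | exact (hS _ ha _ hb (aug_adj_inl_pend.mpr hab.1.symm)).elim
      | exact (hS _ ha _ hb (aug_adj_inl_tri.mpr hab.1.symm)).elim
      | exact (hS _ hb _ ha (aug_adj_inl_pend.mpr hab.1)).elim
      | exact (hS _ hb _ ha (aug_adj_inl_tri.mpr hab.1)).elim
      | (by_cases hbb : qb = qb'
         · subst hbb
           exact congrArg (Sum.inr ∘ Sum.inr) (Subtype.ext (Prod.ext hab.1 (Prod.ext hab.2 rfl)))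
         · refine (hS _ ha _ hb (aug_adj_tri_tri.mpr ⟨?_, hab.1, hab.2⟩)).elim
           exact fun he => hbb (congrArg (fun z => (z : V' × ℕ × Bool).2.2)
             (congrArg Subtype.val he)))

end CWISup
section CWIM
open Sum

variable {V' : Type*} [Fintype V'] [DecidableEq V'] {G' : SimpleGraph V'}
  {U W : Finset V'} {nP nT : V' → ℕ}

/-- the edges of the maximum induced matching -/
def kmap (U : Finset V') (nP nT : V' → ℕ) (hnP : ∀ u ∈ U, 1 ≤ nP u) :
    KT U nT → Sym2 (AugV V' nP nT)
  | Sum.inl u => s(Sum.inl u.1, Sum.inr (Sum.inl ⟨(u.1, 0), hnP u.1 u.2⟩))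
  | Sum.inr t => s(Sum.inr (Sum.inr ⟨(t.1.1, t.1.2, false), t.2⟩),
      Sum.inr (Sum.inr ⟨(t.1.1, t.1.2, true), t.2⟩))

/-- vertex label -/
def vlab : AugV V' nP nT → V' ⊕ (V' × ℕ)
  | Sum.inl x => Sum.inl x
  | Sum.inr (Sum.inl p) => Sum.inl p.1.1
  | Sum.inr (Sum.inr q) => Sum.inr (q.1.1, q.1.2.1)

/-- edge label -/
def kkey (U : Finset V') (nT : V' → ℕ) : KT U nT → V' ⊕ (V' × ℕ)
  | Sum.inl u => Sum.inl u.1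
  | Sum.inr t => Sum.inr t.1

lemma kkey_inj : Function.Injective (kkey U nT) := by
  rintro (u | t) (u' | t') h <;> simp only [kkey] at h
  · injection h with h; rw [Subtype.ext h]
  · injection h
  · injection h
  · injection h with h; rw [Subtype.ext h]

lemma mem_kmap {hnP : ∀ u ∈ U, 1 ≤ nP u} {v : AugV V' nP nT} {k : KT U nT}
    (hv : v ∈ kmap U nP nT hnP k) : vlab v = kkey U nT k := by
  rcases k with u | t <;>
    rcases Sym2.mem_iff.mp hv with rfl | rfl <;> rfl

lemma kmap_inj {hnP : ∀ u ∈ U, 1 ≤ nP u} : Function.Injective (kmap U nP nT hnP) := by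
  intro k k' h
  apply kkey_inj
  obtain ⟨v, hv⟩ : ∃ v, v ∈ kmap U nP nT hnP k := by
    rcases k with u | t
    · exact ⟨Sum.inl u.1, by simp only [kmap]; exact Sym2.mem_mk_left _ _⟩
    · exact ⟨Sum.inr (Sum.inr ⟨((t : V' × ℕ).1, (t : V' × ℕ).2, false), t.2⟩),
        by simp only [kmap]; exact Sym2.mem_mk_left _ _⟩
  rw [← mem_kmap hv, ← mem_kmap (h ▸ hv)]

lemma kmap_edge {hnP : ∀ u ∈ U, 1 ≤ nP u} (k : KT U nT) :
    kmap U nP nT hnP k ∈ (AugGraph G' nP nT).edgeSet := by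
  rcases k with u | t <;> simp only [kmap]
  · exact (AugGraph G' nP nT).mem_edgeSet.mpr (aug_adj_inl_pend.mpr rfl)
  · refine (AugGraph G' nP nT).mem_edgeSet.mpr (aug_adj_tri_tri.mpr ⟨?_, rfl, rfl⟩)
    intro he
    have := congrArg (fun z => (z : V' × ℕ × Bool).2.2) (congrArg Subtype.val he)
    simp at this

lemma kmap_not_adj (hdisj : ∀ x : V', ¬(x ∈ U ∧ x ∈ W))
    (hbip : ∀ a b : V', G'.Adj a b → (a ∈ U ∧ b ∈ W) ∨ (a ∈ W ∧ b ∈ U))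
    (hnP : ∀ u ∈ U, 1 ≤ nP u) (hnT0 : ∀ x ∉ W, nT x = 0)
    {k k' : KT U nT} (hkk : k ≠ k')
    {a b : AugV V' nP nT} (ha : a ∈ kmap U nP nT hnP k) (hb : b ∈ kmap U nP nT hnP k') :
    ¬ (AugGraph G' nP nT).Adj a b := by
  have keyW : ∀ t : TIdx nT, (t : V' × ℕ).1 ∈ W := by
    rintro ⟨⟨x, i⟩, ht⟩
    simp only at ht ⊢
    by_contra hc
    rw [hnT0 x hc] at ht
    omega
  rcases k with u | t <;> rcases k' with u' | t' <;>
    rcases Sym2.mem_iff.mp ha with rfl | rfl <;>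
    rcases Sym2.mem_iff.mp hb with rfl | rfl <;>
    intro hadj <;>
    first
      | exact aug_adj_pend_pend hadj
      | exact aug_adj_pend_tri hadj
      | exact aug_adj_pend_tri ((AugGraph G' nP nT).adj_symm hadj)
      | exact hkk (congrArg Sum.inl (Subtype.ext (aug_adj_inl_pend.mp hadj).symm))
      | exact hkk (congrArg Sum.inl
          (Subtype.ext (aug_adj_inl_pend.mp ((AugGraph G' nP nT).adj_symm hadj))))
      | exact hdisj u.1 ⟨u.2, (aug_adj_inl_tri.mp hadj) ▸ keyW t'⟩
      | exact hdisj u'.1 ⟨u'.2, (aug_adj_inl_tri.mp ((AugGraph G' nP nT).adj_symm hadj)) ▸ keyW t⟩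
      | exact hkk (congrArg Sum.inr (Subtype.ext (Prod.ext (aug_adj_tri_tri.mp hadj).2.1
          (aug_adj_tri_tri.mp hadj).2.2)))
      | (rcases hbip _ _ ((aug_adj_inl_inl G').mp hadj) with ⟨h1, h2⟩ | ⟨h1, h2⟩
         · exact hdisj u'.1 ⟨u'.2, h2⟩
         · exact hdisj u.1 ⟨u.2, h1⟩)

end CWIM
section CWMM
open Sum

variable {V' : Type*} [Fintype V'] [DecidableEq V'] {G' : SimpleGraph V'}
  {U W : Finset V'} {nP nT : V' → ℕ}

lemma tri_edge_structure {e : Sym2 (AugV V' nP nT)} (he : e ∈ (AugGraph G' nP nT).edgeSet)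
    {q : TriT nT} (hq : Sum.inr (Sum.inr q) ∈ e) :
    (Sum.inl (q : V' × ℕ × Bool).1 ∈ e) ∨
    ∃ q' : TriT nT, Sum.inr (Sum.inr q') ∈ e ∧
      (q' : V' × ℕ × Bool).1 = (q : V' × ℕ × Bool).1 ∧
      (q' : V' × ℕ × Bool).2.1 = (q : V' × ℕ × Bool).2.1 ∧ q' ≠ q := by
  induction e using Sym2.ind with
  | _ a b =>
    rw [SimpleGraph.mem_edgeSet] at he
    rcases Sym2.mem_iff.mp hq with rfl | rfl
    · rcases b with y | p | q''
      · left
        rw [aug_adj_inl_tri.mp ((AugGraph G' nP nT).adj_symm he)]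
        exact Sym2.mem_mk_right _ _
      · exact absurd ((AugGraph G' nP nT).adj_symm he) aug_adj_pend_tri
      · obtain ⟨hne, hx, hi⟩ := aug_adj_tri_tri.mp he
        exact Or.inr ⟨q'', Sym2.mem_mk_right _ _, hx.symm, hi.symm,
          fun h => hne h.symm⟩
    · rcases a with y | p | q''
      · left
        rw [aug_adj_inl_tri.mp he]
        exact Sym2.mem_mk_left _ _
      · exact absurd he aug_adj_pend_tri
      · obtain ⟨hne, hx, hi⟩ := aug_adj_tri_tri.mp ((AugGraph G' nP nT).adj_symm he)
        exact Or.inr ⟨q'', Sym2.mem_mk_left _ _, hx.symm, hi.symm,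
          fun h => hne h.symm⟩

/-- labelling relation for edges -/
def labRel (U : Finset V') (nP nT : V' → ℕ) (e : Sym2 (AugV V' nP nT)) : KT U nT → Prop
  | Sum.inl u => Sum.inl u.1 ∈ e
  | Sum.inr t => ∃ b : Bool,
      Sum.inr (Sum.inr ⟨((t : V' × ℕ).1, (t : V' × ℕ).2, b), t.2⟩) ∈ e

lemma labRel_exists
    (hbip : ∀ a b : V', G'.Adj a b → (a ∈ U ∧ b ∈ W) ∨ (a ∈ W ∧ b ∈ U))
    (hdisj : ∀ x : V', ¬(x ∈ U ∧ x ∈ W))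
    (hnP0 : ∀ x ∉ U, nP x = 0)
    {e : Sym2 (AugV V' nP nT)} (he : e ∈ (AugGraph G' nP nT).edgeSet) :
    ∃ k : KT U nT, labRel U nP nT e k := by
  have memU : ∀ p : PendT nP, (p : V' × ℕ).1 ∈ U := by
    rintro ⟨⟨x, i⟩, hp⟩
    simp only at hp ⊢
    by_contra hc
    rw [hnP0 x hc] at hp
    omega
  induction e using Sym2.ind with
  | _ a b =>
    rw [SimpleGraph.mem_edgeSet] at he
    rcases a with x | p | q <;> rcases b with y | p' | q'
    · rcases hbip _ _ ((aug_adj_inl_inl G').mp he) with ⟨h1, -⟩ | ⟨-, h2⟩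
      · exact ⟨Sum.inl ⟨x, h1⟩, Sym2.mem_mk_left _ _⟩
      · exact ⟨Sum.inl ⟨y, h2⟩, Sym2.mem_mk_right _ _⟩
    · refine ⟨Sum.inl ⟨x, ?_⟩, Sym2.mem_mk_left _ _⟩
      rw [← aug_adj_inl_pend.mp he]
      exact memU p'
    · exact ⟨Sum.inr ⟨((q' : V' × ℕ × Bool).1, (q' : V' × ℕ × Bool).2.1), q'.2⟩,
        (q' : V' × ℕ × Bool).2.2, Sym2.mem_mk_right _ _⟩
    · refine ⟨Sum.inl ⟨y, ?_⟩, Sym2.mem_mk_right _ _⟩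
      rw [← aug_adj_inl_pend.mp ((AugGraph G' nP nT).adj_symm he)]
      exact memU p
    · exact absurd he aug_adj_pend_pend
    · exact absurd he aug_adj_pend_tri
    · exact ⟨Sum.inr ⟨((q : V' × ℕ × Bool).1, (q : V' × ℕ × Bool).2.1), q.2⟩,
        (q : V' × ℕ × Bool).2.2, Sym2.mem_mk_left _ _⟩
    · exact absurd ((AugGraph G' nP nT).adj_symm he) aug_adj_pend_tri
    · exact ⟨Sum.inr ⟨((q : V' × ℕ × Bool).1, (q : V' × ℕ × Bool).2.1), q.2⟩,
        (q : V' × ℕ × Bool).2.2, Sym2.mem_mk_left _ _⟩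

lemma MM_le (hU : U.Nonempty)
    (hbip : ∀ a b : V', G'.Adj a b → (a ∈ U ∧ b ∈ W) ∨ (a ∈ W ∧ b ∈ U))
    (hdisj : ∀ x : V', ¬(x ∈ U ∧ x ∈ W))
    (hnP0 : ∀ x ∉ U, nP x = 0)
    (M : Finset (Sym2 (AugV V' nP nT))) (hM : IsMatchingSet (AugGraph G' nP nT) M) :
    M.card ≤ Fintype.card (KT U nT) := by
  classical
  have boolkey : ∀ x y z : Bool, x ≠ y → z ≠ y → x = z := by decide
  set d : KT U nT := Sum.inl ⟨hU.choose, hU.choose_spec⟩ with hd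
  set f : Sym2 (AugV V' nP nT) → KT U nT := fun e =>
    if h : ∃ k : KT U nT, labRel U nP nT e k then h.choose else d with hf
  have hlab : ∀ e ∈ M, labRel U nP nT e (f e) := by
    intro e heM
    have hex := labRel_exists hbip hdisj hnP0 (hM.1 e heM)
    rw [hf]
    simp only [dif_pos hex]
    exact hex.choose_spec
  rw [← Finset.card_univ]
  refine Finset.card_le_card_of_injOn f (fun a _ => Finset.mem_univ _) ?_
  intro e he e' he' heq
  by_contra hne
  have share : ∀ v : AugV V' nP nT, v ∈ e → v ∈ e' → False :=
    fun v h1 h2 => hM.2 e he e' he' hne v h1 h2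
  have h1 := hlab e he
  have h2 := hlab e' he'
  rw [heq] at h1
  rcases hk : f e' with u | t <;> rw [hk] at h1 h2
  · exact share _ h1 h2
  · obtain ⟨b, hb⟩ := h1
    obtain ⟨b', hb'⟩ := h2
    by_cases hbb : b = b'
    · subst hbb
      exact share _ hb hb'
    · rcases tri_edge_structure (hM.1 e he) hb with hc1 | ⟨qq, hqq, hx, hi, hqne⟩
      · rcases tri_edge_structure (hM.1 e' he') hb' with hc2 | ⟨qq', hqq', hx', hi', hqne'⟩
        · exact share _ hc1 hc2
        · -- qq' = the (t, b) vertex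
          have hb2 : (qq' : V' × ℕ × Bool).2.2 ≠ b' := by
            intro hcon
            exact hqne' (Subtype.ext (Prod.ext hx' (Prod.ext hi' hcon)))
          have hq2 : qq' = ⟨((t : V' × ℕ).1, (t : V' × ℕ).2, b), t.2⟩ :=
            Subtype.ext (Prod.ext hx' (Prod.ext hi' (boolkey _ b' b hb2 hbb)))
          rw [hq2] at hqq'
          exact share _ hb hqq'
      · -- qq = the (t, b') vertex
        have hb2 : (qq : V' × ℕ × Bool).2.2 ≠ b := by
          intro hcon
          exact hqne (Subtype.ext (Prod.ext hx (Prod.ext hi hcon)))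
        have hqq2 : qq = ⟨((t : V' × ℕ).1, (t : V' × ℕ).2, b'), t.2⟩ :=
          Subtype.ext (Prod.ext hx (Prod.ext hi (boolkey _ b b' hb2 (Ne.symm hbb))))
        rw [hqq2] at hqq
        exact share _ hqq hb'

end CWMM
section CWfinal
open Sum

variable {V' : Type*} [Fintype V'] [DecidableEq V'] {G' : SimpleGraph V'}
  {U W : Finset V'} {nP nT : V' → ℕ}

lemma IM_mem (hdisj : ∀ x : V', ¬(x ∈ U ∧ x ∈ W))
    (hbip : ∀ a b : V', G'.Adj a b → (a ∈ U ∧ b ∈ W) ∨ (a ∈ W ∧ b ∈ U))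
    (hnP : ∀ u ∈ U, 1 ≤ nP u) (hnT0 : ∀ x ∉ W, nT x = 0) :
    ∃ M : Finset (Sym2 (AugV V' nP nT)), IsInducedMatchingSet (AugGraph G' nP nT) M ∧
      M.card = Fintype.card (KT U nT) := by
  refine ⟨Finset.univ.map ⟨kmap U nP nT hnP, kmap_inj⟩, ⟨⟨?_, ?_⟩, ?_⟩, by simp⟩
  · intro e he
    obtain ⟨k, -, rfl⟩ := Finset.mem_map.mp he
    exact kmap_edge (hnP := hnP) k
  · intro e he f hf hef v hv hvf
    obtain ⟨k, -, rfl⟩ := Finset.mem_map.mp he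
    obtain ⟨k', -, rfl⟩ := Finset.mem_map.mp hf
    have hkk : k ≠ k' := fun h => hef (congrArg _ h)
    exact hkk (kkey_inj ((mem_kmap (hnP := hnP) hv).symm.trans (mem_kmap (hnP := hnP) hvf)))
  · intro e he f hf hef a ha b hb
    obtain ⟨k, -, rfl⟩ := Finset.mem_map.mp he
    obtain ⟨k', -, rfl⟩ := Finset.mem_map.mp hf
    exact kmap_not_adj hdisj hbip hnP hnT0 (fun h => hef (congrArg _ h)) ha hb

lemma ISn_eq (hpart : ∀ x : V', x ∈ U ∨ x ∈ W) (hdisj : ∀ x : V', ¬(x ∈ U ∧ x ∈ W))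
    (hbip : ∀ a b : V', G'.Adj a b → (a ∈ U ∧ b ∈ W) ∨ (a ∈ W ∧ b ∈ U))
    (hnP : ∀ u ∈ U, 1 ≤ nP u) (hnP0 : ∀ x ∉ U, nP x = 0) :
    ISn (AugGraph G' nP nT) = Fintype.card (JT W nP nT) := by
  apply IsGreatest.csSup_eq
  constructor
  · obtain ⟨S, hS, hc⟩ := IS_mem (G' := G') hdisj hbip hnP0
    exact ⟨S, hS, hc⟩
  · rintro n ⟨S, hS, rfl⟩
    exact IS_le hpart hnP S hS

lemma IMn_eq (hU : U.Nonempty) (hdisj : ∀ x : V', ¬(x ∈ U ∧ x ∈ W))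
    (hbip : ∀ a b : V', G'.Adj a b → (a ∈ U ∧ b ∈ W) ∨ (a ∈ W ∧ b ∈ U))
    (hnP : ∀ u ∈ U, 1 ≤ nP u) (hnP0 : ∀ x ∉ U, nP x = 0) (hnT0 : ∀ x ∉ W, nT x = 0) :
    IMn (AugGraph G' nP nT) = Fintype.card (KT U nT) := by
  apply IsGreatest.csSup_eq
  constructor
  · obtain ⟨M, hM, hc⟩ := IM_mem (G' := G') hdisj hbip hnP hnT0
    exact ⟨M, hM, hc⟩
  · rintro n ⟨M, hM, rfl⟩
    exact MM_le hU hbip hdisj hnP0 M hM.1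

end CWfinal

theorem stmt_16 {V' : Type*} [Fintype V'] [DecidableEq V'] (G' : SimpleGraph V')
    (U W : Finset V') (nP nT : V' → ℕ)
    (hpart : ∀ x : V', x ∈ U ∨ x ∈ W) (hdisj : ∀ x : V', ¬(x ∈ U ∧ x ∈ W))
    (hU : U.Nonempty) (hW : W.Nonempty)
    (hbip : ∀ a b : V', G'.Adj a b → (a ∈ U ∧ b ∈ W) ∨ (a ∈ W ∧ b ∈ U))
    (hconn : G'.Connected)
    (hnP : ∀ u ∈ U, 1 ≤ nP u) (hnP0 : ∀ x ∉ U, nP x = 0)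
    (hnT0 : ∀ x ∉ W, nT x = 0) :
    ISn (AugGraph G' nP nT) = IMn (AugGraph G' nP nT) ↔
      (∀ u ∈ U, nP u = 1) ∧ (∀ w ∈ W, 1 ≤ nT w) := by
  rw [ISn_eq hpart hdisj hbip hnP hnP0, IMn_eq hU hdisj hbip hnP hnP0 hnT0,
    card_JT U W nP nT hpart hdisj hnP0 hnT0, card_KT U W nT hnT0]
  have hU1 : ∑ u ∈ U, (1 : ℕ) = U.card := by simp
  have hA : ∑ u ∈ U, (1 : ℕ) ≤ ∑ u ∈ U, nP u := Finset.sum_le_sum hnP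
  have hB : ∑ w ∈ W, nT w ≤ ∑ w ∈ W, max (nT w) 1 :=
    Finset.sum_le_sum (fun w _ => le_max_left _ _)
  constructor
  · intro h
    have h1 : ∑ u ∈ U, nP u = U.card := by omega
    have h2 : ∑ w ∈ W, nT w = ∑ w ∈ W, max (nT w) 1 := by omega
    constructor
    · intro u hu
      exact ((Finset.sum_eq_sum_iff_of_le hnP).mp (hU1.symm ▸ h1.symm) u hu).symm
    · intro w hw
      have h3 := (Finset.sum_eq_sum_iff_of_le
        (fun w (_ : w ∈ W) => le_max_left (nT w) 1)).mp h2 w hw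
      rcases Nat.eq_zero_or_pos (nT w) with h0 | h0
      · rw [h0] at h3
        simp at h3
      · exact h0
  · rintro ⟨hP1, hT1⟩
    have e1 : ∑ u ∈ U, nP u = U.card := by
      rw [← hU1]
      exact Finset.sum_congr rfl (fun u hu => hP1 u hu)
    have e2 : ∑ w ∈ W, max (nT w) 1 = ∑ w ∈ W, nT w :=
      Finset.sum_congr rfl (fun w hw => Nat.max_eq_left (hT1 w hw))
    omega
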